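/- For every complex number z not a multiple of 2π, the series identity 1/z + Σ_{k≥1} 2z/(z² - (2kπ)²) = 1/(2 tan(z/2)) holds. -/

import Mathlib

open Filter Finset Complex Topology Metric

noncomputable abbrev eulerF (N : ℕ) (w : ℂ) : ℂ :=
  (Real.pi : ℂ) * w * ∏ j ∈ Finset.range N, (1 - w ^ 2 / ((j : ℂ) + 1) ^ 2)

lemma base_summable : Summable (fun j : ℕ => 1 / ((j : ℝ) + 1) ^ 2) := by
  have h := (summable_nat_add_iff 1).mpr (Real.summable_one_div_nat_pow.mpr one_lt_two)
  refine h.congr fun j => ?_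
  push_cast
  ring

lemma norm_div_sq (w : ℂ) (j : ℕ) :
    ‖w ^ 2 / ((j : ℂ) + 1) ^ 2‖ = ‖w‖^2 / ((j:ℝ)+1)^2 := by
  rw [norm_div, norm_pow, norm_pow]
  congr 2
  have : ((j : ℂ) + 1) = ((j+1 : ℕ) : ℂ) := by push_cast; ring
  rw [this, Complex.norm_natCast]
  push_cast; ring

lemma euler_tlu : TendstoLocallyUniformlyOn eulerF
    (fun w => Complex.sin ((Real.pi : ℂ) * w)) atTop Set.univ := by
  rw [tendstoLocallyUniformlyOn_iff_forall_isCompact isOpen_univ]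
  intro K _ hK
  obtain ⟨R, hKR⟩ := hK.isBounded.subset_closedBall 0
  set S : ℝ := max R 1 with hS
  have hS1 : (1:ℝ) ≤ S := le_max_right _ _
  have hR0 : (0:ℝ) ≤ S := zero_le_one.trans hS1
  have hKS : K ⊆ Metric.closedBall 0 S := hKR.trans (closedBall_subset_closedBall (le_max_left _ _))
  obtain ⟨N₀, hN₀⟩ : ∃ N₀ : ℕ, 2 * S ≤ (N₀ : ℝ) := ⟨⌈2*S⌉₊, Nat.le_ceil _⟩
  have key : ∀ j : ℕ, N₀ ≤ j → ∀ w ∈ K, ‖w ^ 2 / ((j : ℂ) + 1) ^ 2‖ ≤ S^2 / ((j:ℝ)+1)^2 ∧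
      ‖w ^ 2 / ((j : ℂ) + 1) ^ 2‖ ≤ 1/2 := by
    intro j hj w hw
    have hwS : ‖w‖ ≤ S := by simpa using hKS hw
    have hj1 : (0:ℝ) < ((j:ℝ)+1)^2 := by positivity
    have hb : ‖w ^ 2 / ((j : ℂ) + 1) ^ 2‖ ≤ S^2 / ((j:ℝ)+1)^2 := by
      rw [norm_div_sq]
      gcongr
    refine ⟨hb, hb.trans ?_⟩
    have hjN : (N₀ : ℝ) ≤ (j : ℝ) := Nat.cast_le.mpr hj
    have h2S : 2 * S ≤ (j:ℝ) + 1 := by linarith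
    rw [div_le_iff₀ hj1]
    nlinarith
  -- the log terms
  set g : ℕ → ℂ → ℂ := fun j w => Complex.log (1 - w ^ 2 / (((N₀ + j : ℕ) : ℂ) + 1) ^ 2) with hg
  set u : ℕ → ℝ := fun j => (3/2) * (S^2 / (((N₀ + j : ℕ) : ℝ) + 1) ^ 2) with hu
  have hu_sum : Summable u := by
    have h1 : Summable (fun j : ℕ => S^2 * (3/2) * (1 / (((j + N₀ : ℕ) : ℝ) + 1) ^ 2)) := by
      have := ((summable_nat_add_iff N₀).mpr base_summable).mul_left (S^2 * (3/2))
      exact this.congr fun j => by push_cast; ring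
    exact h1.congr fun j => by simp [hu]; push_cast; ring
  have hfu : ∀ j : ℕ, ∀ w ∈ K, ‖g j w‖ ≤ u j := by
    intro j w hw
    obtain ⟨h1, h2⟩ := key (N₀ + j) (Nat.le_add_right _ _) w hw
    have := Complex.norm_log_one_add_half_le_self (z := -(w ^ 2 / (((N₀+j : ℕ) : ℂ) + 1) ^ 2))
      (by rwa [norm_neg])
    rw [hg]
    simp only [← sub_eq_add_neg] at this
    refine this.trans ?_
    rw [norm_neg, hu]
    nlinarith
  have htsum := tendstoUniformlyOn_tsum_nat hu_sum (s := K) hfu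
  -- nonvanishing of tail factors
  have hne : ∀ j : ℕ, ∀ w ∈ K, (1 - w ^ 2 / (((N₀ + j : ℕ) : ℂ) + 1) ^ 2) ≠ 0 := by
    intro j w hw
    obtain ⟨_, h2⟩ := key (N₀ + j) (Nat.le_add_right _ _) w hw
    intro h
    have hq : (1:ℂ) = w ^ 2 / (((N₀+j:ℕ) : ℂ) + 1) ^ 2 := sub_eq_zero.mp h
    rw [← hq] at h2
    norm_num at h2
  -- product-exp representation
  have hrep : ∀ N : ℕ, ∀ w ∈ K, eulerF (N₀ + N) w
      = eulerF N₀ w * Complex.exp (∑ j ∈ range N, g j w) := by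
    intro N w hw
    rw [eulerF, eulerF, Finset.prod_range_add, Complex.exp_sum, ← mul_assoc]
    congr 1
    refine Finset.prod_congr rfl fun j hj => ?_
    rw [hg]
    exact (Complex.exp_log (hne j w hw)).symm
  -- bound on partial sums and tsum of g
  set C : ℝ := ∑' j, u j with hC
  have hgsum : ∀ w ∈ K, Summable (fun j => g j w) := fun w hw =>
    Summable.of_norm_bounded hu_sum (fun j => hfu j w hw)
  have hbound : ∀ N : ℕ, ∀ w ∈ K, ‖∑ j ∈ range N, g j w‖ ≤ C := by
    intro N w hw
    refine (norm_sum_le _ _).trans ?_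
    refine le_trans (Finset.sum_le_sum fun j _ => hfu j w hw) ?_
    exact hu_sum.sum_le_tsum _ (fun j _ => (norm_nonneg (g j w)).trans (hfu j w hw))
  have hCb : ∀ w ∈ K, ‖∑' j, g j w‖ ≤ C := by
    intro w hw
    have hsn : Summable (fun j => ‖g j w‖) :=
      Summable.of_nonneg_of_le (fun _ => norm_nonneg _) (fun j => hfu j w hw) hu_sum
    exact (norm_tsum_le_tsum_norm hsn).trans (Summable.tsum_le_tsum (fun j => hfu j w hw) hsn hu_sum)
  -- bound eulerF N₀ on K
  have hcont : Continuous (eulerF N₀) := by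
    refine (continuous_const.mul continuous_id).mul (continuous_finset_prod _ fun j _ => ?_)
    exact continuous_const.sub ((continuous_pow 2).div_const _)
  obtain ⟨D, hD⟩ := hK.exists_bound_of_continuousOn hcont.continuousOn
  set D' : ℝ := max D 0 + 1 with hD'
  have hD'pos : 0 < D' := by positivity
  have hD'b : ∀ w ∈ K, ‖eulerF N₀ w‖ ≤ D' := fun w hw =>
    (hD w hw).trans (by simp [hD']; linarith [le_max_left D (0:ℝ)])
  set G : ℂ → ℂ := fun w => eulerF N₀ w * Complex.exp (∑' j, g j w) with hG
  have hGlim : TendstoUniformlyOn (fun N => eulerF (N₀ + N)) G atTop K := by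
    rw [Metric.tendstoUniformlyOn_iff]
    intro ε hε
    have hden : 0 < 2 * D' * Real.exp C + 1 := by positivity
    set δ : ℝ := min 1 (ε / (2 * D' * Real.exp C + 1)) with hδ
    have hδpos : 0 < δ := lt_min one_pos (by positivity)
    filter_upwards [Metric.tendstoUniformlyOn_iff.mp htsum δ hδpos] with N hN w hw
    have hd := hN w hw
    rw [dist_eq_norm] at hd
    rw [hrep N w hw, hG, dist_eq_norm]
    have hfac : eulerF N₀ w * Complex.exp (∑' j, g j w)
        - eulerF N₀ w * Complex.exp (∑ j ∈ range N, g j w)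
        = eulerF N₀ w * Complex.exp (∑ j ∈ range N, g j w)
          * (Complex.exp ((∑' j, g j w) - ∑ j ∈ range N, g j w) - 1) := by
      have he : Complex.exp (∑' j, g j w) = Complex.exp (∑ j ∈ range N, g j w)
          * Complex.exp ((∑' j, g j w) - ∑ j ∈ range N, g j w) := by
        rw [← Complex.exp_add]
        congr 1
        ring
      rw [he]
      ring
    rw [hfac]
    have hb1 : ‖Complex.exp (∑ j ∈ range N, g j w)‖ ≤ Real.exp C := by
      rw [Complex.norm_exp]
      exact Real.exp_le_exp.mpr ((Complex.re_le_norm _).trans (hbound N w hw))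
    have hb2 : ‖Complex.exp ((∑' j, g j w) - ∑ j ∈ range N, g j w) - 1‖
        ≤ 2 * ‖(∑' j, g j w) - ∑ j ∈ range N, g j w‖ := by
      have := Complex.norm_exp_sub_one_le
        (x := (∑' j, g j w) - ∑ j ∈ range N, g j w)
        (by exact hd.le.trans (min_le_left _ _))
      simpa using this
    have hnorm : ‖eulerF N₀ w * Complex.exp (∑ j ∈ range N, g j w)
        * (Complex.exp ((∑' j, g j w) - ∑ j ∈ range N, g j w) - 1)‖
        ≤ D' * Real.exp C * (2 * δ) := by
      rw [norm_mul, norm_mul]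
      have h3 : ‖(∑' j, g j w) - ∑ j ∈ range N, g j w‖ ≤ δ := hd.le
      gcongr ?_ * ?_ * ?_
      · exact hD'b w hw
      · exact hb2.trans (by linarith)
    refine hnorm.trans_lt ?_
    have hδ2 : δ ≤ ε / (2 * D' * Real.exp C + 1) := min_le_right _ _
    have h4 := mul_le_mul_of_nonneg_left hδ2 (by positivity : (0:ℝ) ≤ 2 * D' * Real.exp C)
    have h5 : D' * Real.exp C * (2 * δ) = 2 * D' * Real.exp C * δ := by ring
    rw [h5]
    refine h4.trans_lt ?_
    rw [mul_div_assoc', div_lt_iff₀ hden]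
    nlinarith [Real.exp_pos C]
  have hGsin : Set.EqOn G (fun w => Complex.sin ((Real.pi : ℂ) * w)) K := by
    intro w hw
    have h1 : Tendsto (fun N => eulerF (N₀ + N) w) atTop (𝓝 (G w)) := hGlim.tendsto_at hw
    have h2 : Tendsto (fun N => eulerF (N₀ + N) w) atTop (𝓝 (Complex.sin ((Real.pi : ℂ) * w))) := by
      have h3 := (Complex.tendsto_euler_sin_prod w).comp (tendsto_add_atTop_nat N₀)
      exact h3.congr fun N => by simp [eulerF, Function.comp, Nat.add_comm]
    exact tendsto_nhds_unique h1 h2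
  have hfinal := hGlim.congr_right hGsin
  rw [Metric.tendstoUniformlyOn_iff] at hfinal ⊢
  intro ε hε
  obtain ⟨M, hM⟩ := eventually_atTop.mp (hfinal ε hε)
  refine eventually_atTop.2 ⟨N₀ + M, fun n hn x hx => ?_⟩
  have h1 : n = N₀ + (n - N₀) := by omega
  rw [h1]
  exact hM (n - N₀) (by omega) x hx

lemma norm_cj (j : ℕ) : ‖((j : ℂ) + 1)‖ = (j : ℝ) + 1 := by
  have : ((j : ℂ) + 1) = ((j + 1 : ℕ) : ℂ) := by push_cast; ring
  rw [this, Complex.norm_natCast]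
  push_cast; ring

lemma factor_ne_zero {x : ℂ} (hx : ∀ k : ℤ, x ≠ (k : ℂ)) (j : ℕ) :
    1 - x ^ 2 / ((j : ℂ) + 1) ^ 2 ≠ 0 := by
  have hj : ((j : ℂ) + 1) ≠ 0 := by
    have : ((j + 1 : ℕ) : ℂ) ≠ 0 := Nat.cast_ne_zero.mpr (Nat.succ_ne_zero j)
    push_cast at this
    exact this
  intro h
  have h2 : x ^ 2 = ((j : ℂ) + 1) ^ 2 := by
    field_simp at h
    linear_combination -h
  have hsq : (x - ((j : ℂ) + 1)) * (x + ((j : ℂ) + 1)) = 0 := by linear_combination h2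
  rcases mul_eq_zero.mp hsq with h1 | h1
  · exact hx (j + 1) (by push_cast; linear_combination h1)
  · exact hx (-(j + 1)) (by push_cast; linear_combination h1)

lemma logDeriv_eulerF (N : ℕ) {x : ℂ} (hx : ∀ k : ℤ, x ≠ (k : ℂ)) :
    logDeriv (eulerF N) x = 1 / x + ∑ j ∈ Finset.range N, 2 * x / (x ^ 2 - ((j : ℂ) + 1) ^ 2) := by
  have hx0 : x ≠ 0 := by simpa using hx 0
  have hπ : (Real.pi : ℂ) ≠ 0 := Complex.ofReal_ne_zero.mpr Real.pi_ne_zero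
  have hprodne : (∏ j ∈ Finset.range N, (1 - x ^ 2 / ((j : ℂ) + 1) ^ 2)) ≠ 0 :=
    Finset.prod_ne_zero_iff.mpr fun j _ => factor_ne_zero hx j
  have hd1 : ∀ j : ℕ, DifferentiableAt ℂ (fun w : ℂ => 1 - w ^ 2 / ((j : ℂ) + 1) ^ 2) x := by
    intro j
    exact (differentiableAt_const _).sub ((differentiableAt_pow (𝕜 := ℂ) 2).div_const _)
  have hd2 : DifferentiableAt ℂ
      (fun w : ℂ => ∏ j ∈ Finset.range N, (1 - w ^ 2 / ((j : ℂ) + 1) ^ 2)) x :=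
    DifferentiableAt.fun_finsetProd fun j _ => hd1 j
  rw [show eulerF N = fun w => ((Real.pi : ℂ) * w) *
      (fun w => ∏ j ∈ Finset.range N, (1 - w ^ 2 / ((j : ℂ) + 1) ^ 2)) w from rfl]
  rw [logDeriv_mul x (mul_ne_zero hπ hx0) hprodne
      ((differentiableAt_const _).mul differentiableAt_id) hd2]
  congr 1
  · rw [logDeriv_const_mul x _ hπ, logDeriv_id']
  · rw [logDeriv_prod (fun j _ => factor_ne_zero hx j)
      (fun j _ => hd1 j)]
    refine Finset.sum_congr rfl fun j _ => ?_
    have hd : HasDerivAt (fun w : ℂ => 1 - w ^ 2 / ((j : ℂ) + 1) ^ 2)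
        (-(2 * x / ((j : ℂ) + 1) ^ 2)) x := by
      have := ((hasDerivAt_pow 2 x).div_const (((j : ℂ) + 1) ^ 2)).const_sub 1
      simpa using this
    rw [logDeriv_apply, hd.deriv]
    have hj0 : ((j : ℂ) + 1) ≠ 0 := by
      have : ((j + 1 : ℕ) : ℂ) ≠ 0 := Nat.cast_ne_zero.mpr (Nat.succ_ne_zero j)
      push_cast at this
      exact this
    have hj : ((j : ℂ) + 1) ^ 2 ≠ 0 := pow_ne_zero 2 hj0
    have hfac := factor_ne_zero hx j
    have hne2 : x ^ 2 - ((j : ℂ) + 1) ^ 2 ≠ 0 := by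
      intro h
      rw [sub_eq_zero] at h
      exact factor_ne_zero hx j (by rw [h, div_self hj, sub_self])
    rw [div_eq_div_iff hfac hne2]
    field_simp
    ring

lemma logDeriv_sin_pi (x : ℂ) :
    logDeriv (fun w => Complex.sin ((Real.pi : ℂ) * w)) x
      = (Real.pi : ℂ) * Complex.cot ((Real.pi : ℂ) * x) := by
  have h := logDeriv_comp (f := Complex.sin) (g := fun w : ℂ => (Real.pi : ℂ) * w) (x := x)
    Complex.differentiable_sin.differentiableAt ((differentiable_id.const_mul _).differentiableAt)
  have hder : deriv (fun w : ℂ => (Real.pi : ℂ) * w) x = (Real.pi : ℂ) := by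
    simpa using ((hasDerivAt_id x).const_mul ((Real.pi : ℂ))).deriv
  rw [Function.comp_def] at h
  rw [h, hder, Complex.logDeriv_sin, mul_comm]

lemma summable_terms (x : ℂ) :
    Summable (fun j : ℕ => 2 * x / (x ^ 2 - ((j : ℂ) + 1) ^ 2)) := by
  obtain ⟨J, hJ⟩ : ∃ J : ℕ, 2 * ‖x‖ ≤ (J : ℝ) := ⟨⌈2 * ‖x‖⌉₊, Nat.le_ceil _⟩
  refine Summable.of_norm_bounded_eventually_nat (g := fun j => 4 * ‖x‖ * (1 / ((j : ℝ) + 1) ^ 2))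
    (base_summable.mul_left _) ?_
  filter_upwards [eventually_ge_atTop J] with j hj
  have hjR : (J : ℝ) ≤ (j : ℝ) := Nat.cast_le.mpr hj
  have h2x : 2 * ‖x‖ ≤ (j : ℝ) + 1 := by linarith
  have hpos : (0 : ℝ) < ((j : ℝ) + 1) ^ 2 := by positivity
  have hden : ((j : ℝ) + 1) ^ 2 / 2 ≤ ‖x ^ 2 - ((j : ℂ) + 1) ^ 2‖ := by
    have h1 : ‖x ^ 2 - ((j : ℂ) + 1) ^ 2‖ = ‖((j : ℂ) + 1) ^ 2 - x ^ 2‖ := norm_sub_rev _ _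
    rw [h1]
    refine le_trans ?_ (norm_sub_norm_le _ _)
    rw [norm_pow, norm_cj, norm_pow]
    nlinarith [norm_nonneg x]
  have hdenpos : (0 : ℝ) < ‖x ^ 2 - ((j : ℂ) + 1) ^ 2‖ := lt_of_lt_of_le (by positivity) hden
  rw [norm_div, norm_mul]
  have : ‖(2 : ℂ)‖ = 2 := by norm_num
  rw [this]
  rw [div_le_iff₀ hdenpos]
  have key : 4 * ‖x‖ * (1 / ((j : ℝ) + 1) ^ 2) * (((j : ℝ) + 1) ^ 2 / 2) = 2 * ‖x‖ := by
    field_simp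
    ring
  nlinarith [norm_nonneg x, mul_le_mul_of_nonneg_left hden (by positivity : (0:ℝ) ≤ 4 * ‖x‖ * (1 / ((j : ℝ) + 1) ^ 2))]

lemma partial_tendsto {x : ℂ} (hx : ∀ k : ℤ, x ≠ (k : ℂ)) :
    Tendsto (fun N => ∑ j ∈ Finset.range N, 2 * x / (x ^ 2 - ((j : ℂ) + 1) ^ 2)) atTop
      (𝓝 ((Real.pi : ℂ) * Complex.cot ((Real.pi : ℂ) * x) - 1 / x)) := by
  have hsin : Complex.sin ((Real.pi : ℂ) * x) ≠ 0 := by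
    rw [Complex.sin_ne_zero_iff]
    intro k h
    have hπ : (Real.pi : ℂ) ≠ 0 := Complex.ofReal_ne_zero.mpr Real.pi_ne_zero
    apply hx k
    have : (Real.pi : ℂ) * x = (Real.pi : ℂ) * (k : ℂ) := by rw [h]; ring
    exact mul_left_cancel₀ hπ this
  have hdiff : ∀ N : ℕ, DifferentiableOn ℂ (eulerF N) Set.univ := by
    intro N
    refine Differentiable.differentiableOn ?_
    exact ((differentiable_const _).mul differentiable_id).mul
      (Differentiable.fun_finsetProd fun j _ =>
        (differentiable_const _).sub ((differentiable_pow 2).div_const _))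
  have h := Complex.logDeriv_tendsto (f := eulerF) (g := fun w => Complex.sin ((Real.pi : ℂ) * w))
    isOpen_univ (Set.mem_univ x) euler_tlu (Eventually.of_forall hdiff) (by simpa using hsin)
  rw [logDeriv_sin_pi] at h
  have h2 := h.sub_const (1 / x)
  refine h2.congr fun N => ?_
  rw [logDeriv_eulerF N hx]
  ring

lemma cot_expansion {x : ℂ} (hx : ∀ k : ℤ, x ≠ (k : ℂ)) :
    ∑' j : ℕ, 2 * x / (x ^ 2 - ((j : ℂ) + 1) ^ 2)
      = (Real.pi : ℂ) * Complex.cot ((Real.pi : ℂ) * x) - 1 / x :=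
  tendsto_nhds_unique ((summable_terms x).hasSum.tendsto_sum_nat) (partial_tendsto hx)

/-- For every complex number `z` not an integer multiple of `2π`, the partial-fraction
identity `1/z + Σ_{k≥1} 2z/(z² - (2kπ)²) = 1/(2 tan(z/2))` holds. -/
theorem stmt0 (z : ℂ) (hz : ∀ k : ℤ, z ≠ 2 * (Real.pi : ℂ) * (k : ℂ)) :
    1 / z + ∑' k : ℕ, 2 * z / (z ^ 2 - (2 * ((k : ℂ) + 1) * (Real.pi : ℂ)) ^ 2)
      = 1 / (2 * Complex.tan (z / 2)) := by
  have hπ : (Real.pi : ℂ) ≠ 0 := Complex.ofReal_ne_zero.mpr Real.pi_ne_zero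
  have h2π : (2 : ℂ) * (Real.pi : ℂ) ≠ 0 := mul_ne_zero two_ne_zero hπ
  have hz0 : z ≠ 0 := by
    have := hz 0
    simpa using this
  obtain ⟨x, hxdef⟩ : ∃ x : ℂ, x = z / (2 * (Real.pi : ℂ)) := ⟨_, rfl⟩
  have hx : ∀ k : ℤ, x ≠ (k : ℂ) := by
    intro k h
    apply hz k
    rw [hxdef, div_eq_iff h2π] at h
    rw [h]
    ring
  have hx0 : x ≠ 0 := by simpa using hx 0
  have hterm : ∀ k : ℕ, 2 * z / (z ^ 2 - (2 * ((k : ℂ) + 1) * (Real.pi : ℂ)) ^ 2)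
      = (1 / (2 * (Real.pi : ℂ))) * (2 * x / (x ^ 2 - ((k : ℂ) + 1) ^ 2)) := by
    intro k
    have hj0 : ((k : ℂ) + 1) ≠ 0 := by
      have : ((k + 1 : ℕ) : ℂ) ≠ 0 := Nat.cast_ne_zero.mpr (Nat.succ_ne_zero k)
      push_cast at this
      exact this
    have hj : ((k : ℂ) + 1) ^ 2 ≠ 0 := pow_ne_zero 2 hj0
    have hden : x ^ 2 - ((k : ℂ) + 1) ^ 2 ≠ 0 := by
      intro h
      rw [sub_eq_zero] at h
      exact factor_ne_zero hx k (by rw [h, div_self hj, sub_self])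
    have hzden : z ^ 2 - (2 * ((k : ℂ) + 1) * (Real.pi : ℂ)) ^ 2 ≠ 0 := by
      have hfact : z ^ 2 - (2 * ((k : ℂ) + 1) * (Real.pi : ℂ)) ^ 2
          = (2 * (Real.pi : ℂ)) ^ 2 * (x ^ 2 - ((k : ℂ) + 1) ^ 2) := by
        rw [hxdef]
        field_simp
      rw [hfact]
      exact mul_ne_zero (pow_ne_zero _ h2π) hden
    have hfact : z ^ 2 - (2 * ((k : ℂ) + 1) * (Real.pi : ℂ)) ^ 2
        = (2 * (Real.pi : ℂ)) ^ 2 * (x ^ 2 - ((k : ℂ) + 1) ^ 2) := by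
      rw [hxdef]
      field_simp
    have h2x : 2 * (Real.pi : ℂ) * x = z := by
      rw [hxdef]
      field_simp
    have hshow : (1 / (2 * (Real.pi : ℂ))) * (2 * x / (x ^ 2 - ((k : ℂ) + 1) ^ 2))
        = 2 * x / (2 * (Real.pi : ℂ) * (x ^ 2 - ((k : ℂ) + 1) ^ 2)) := by
      rw [div_mul_div_comm, one_mul]
    rw [hfact, hshow]
    rw [div_eq_div_iff (by rw [← hfact]; exact hzden) (mul_ne_zero h2π hden)]
    linear_combination (-4 * (Real.pi : ℂ) * (x ^ 2 - ((k : ℂ) + 1) ^ 2)) * h2x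
  rw [tsum_congr hterm, tsum_mul_left, cot_expansion hx]
  have hpx : (Real.pi : ℂ) * x = z / 2 := by
    rw [hxdef]
    field_simp
  have h1x : 1 / x = 2 * (Real.pi : ℂ) / z := by rw [hxdef, one_div_div]
  rw [hpx, h1x]
  have hsin : Complex.sin (z / 2) ≠ 0 := by
    rw [Complex.sin_ne_zero_iff]
    intro k h
    exact hz k (by linear_combination 2 * h)
  rw [Complex.cot, Complex.tan]
  rcases eq_or_ne (Complex.cos (z / 2)) 0 with hc | hc
  · rw [hc]
    simp only [zero_div, div_zero, mul_zero, sub_zero]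
    field_simp
    ring
  · field_simp
    ring
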